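/- Let n ≥ 1 and 0 ≤ d with d+1 ≤ 2n. Take the m = 2n nodes x_l = 2l−1 indexed by l = 1−n,…,n, and weights v_l > 0 indexed by l = 1−n,…,n satisfying the symmetry v_l = v_{1−l} for all l. Then the WLPR mask a = W X (XᵀWX)⁻¹ e₁ (indexed by l = 1−n,…,n) is symmetric: a_l = a_{1−l} for all l = 1−n,…,n. -/

import Mathlib

open Matrix

/-- The WLPR mask for the `2n` odd nodes `x_l = 2l − 1`, `l = 1−n,…,n`, with
weights `v_l`: `a = W X (XᵀWX)⁻¹ e₁`, where `X_{l,t} = (2l−1)^t`, `t = 0,…,d`. -/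
noncomputable def oddMask (n d : ℕ) (v : ℤ → ℝ) :
    {l : ℤ // l ∈ Finset.Icc (1 - (n : ℤ)) (n : ℤ)} → ℝ :=
  let X : Matrix {l : ℤ // l ∈ Finset.Icc (1 - (n : ℤ)) (n : ℤ)} (Fin (d + 1)) ℝ :=
    Matrix.of fun l t => ((2 * (l : ℤ) - 1 : ℤ) : ℝ) ^ (t : ℕ)
  let W := Matrix.diagonal (fun l : {l : ℤ // l ∈ Finset.Icc (1 - (n : ℤ)) (n : ℤ)} =>
    v (l : ℤ))
  (W * X * (Xᵀ * W * X)⁻¹) *ᵥ Pi.single 0 1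

/-- with `n ≥ 1`, `d + 1 ≤ 2n`, nodes `x_l = 2l−1` for `l = 1−n,…,n`
and positive weights `v` with the symmetry `v_l = v_{1−l}`, the WLPR mask is
symmetric: `a_l = a_{1−l}` for all `l = 1−n,…,n`. -/
theorem stmt6 (n d : ℕ) (hn : 1 ≤ n) (hd : d + 1 ≤ 2 * n)
    (v : ℤ → ℝ) (hv : ∀ l ∈ Finset.Icc (1 - (n : ℤ)) (n : ℤ), 0 < v l)
    (hsym : ∀ l ∈ Finset.Icc (1 - (n : ℤ)) (n : ℤ), v l = v (1 - l)) :
    ∀ (l : ℤ) (hl : l ∈ Finset.Icc (1 - (n : ℤ)) (n : ℤ))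
      (hl' : 1 - l ∈ Finset.Icc (1 - (n : ℤ)) (n : ℤ)),
      oddMask n d v ⟨l, hl⟩ = oddMask n d v ⟨1 - l, hl'⟩ := by
  classical
  have hmem : ∀ k : ℤ, k ∈ Finset.Icc (1 - (n : ℤ)) (n : ℤ) →
      (1 - k) ∈ Finset.Icc (1 - (n : ℤ)) (n : ℤ) := by
    intro k hk
    simp only [Finset.mem_Icc] at *
    omega
  set ι := {l : ℤ // l ∈ Finset.Icc (1 - (n : ℤ)) (n : ℤ)} with hι
  let σ : ι ≃ ι :=
    { toFun := fun x => ⟨1 - x.1, hmem x.1 x.2⟩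
      invFun := fun x => ⟨1 - x.1, hmem x.1 x.2⟩
      left_inv := fun x => by ext; simp
      right_inv := fun x => by ext; simp }
  let X : Matrix ι (Fin (d + 1)) ℝ :=
    Matrix.of fun l t => ((2 * (l : ℤ) - 1 : ℤ) : ℝ) ^ (t : ℕ)
  let W : Matrix ι ι ℝ := Matrix.diagonal (fun l : ι => v (l : ℤ))
  let G := Xᵀ * W * X
  let S : Matrix (Fin (d + 1)) (Fin (d + 1)) ℝ :=
    Matrix.diagonal fun t : Fin (d + 1) => (-1 : ℝ) ^ (t : ℕ)
  have hSS : S * S = 1 := by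
    rw [show S * S = Matrix.diagonal fun t : Fin (d+1) => (-1:ℝ)^(t:ℕ) * (-1:ℝ)^(t:ℕ) from
      Matrix.diagonal_mul_diagonal _ _]
    have : (fun t : Fin (d+1) => (-1:ℝ)^(t:ℕ) * (-1:ℝ)^(t:ℕ)) = fun _ => 1 := by
      funext t
      rw [← pow_add]
      exact Even.neg_one_pow ⟨(t:ℕ), rfl⟩
    rw [this, Matrix.diagonal_one]
  have hSinv : S⁻¹ = S := Matrix.inv_eq_right_inv hSS
  have hG : ∀ s t : Fin (d + 1), G s t =
      ∑ l : ι, ((2 * (l : ℤ) - 1 : ℤ) : ℝ) ^ (s : ℕ) *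
        (v (l : ℤ) * ((2 * (l : ℤ) - 1 : ℤ) : ℝ) ^ (t : ℕ)) := by
    intro s t
    show (Xᵀ * W * X) s t = _
    rw [Matrix.mul_assoc, Matrix.mul_apply]
    refine Finset.sum_congr rfl fun l _ => ?_
    rw [Matrix.mul_apply]
    simp [X, W, Matrix.diagonal, Finset.sum_ite_eq]
    left
    rw [Finset.sum_eq_single l]
    · simp
    · intro b _ hb
      simp [Ne.symm hb]
    · simp
  have hGS : S * G * S = G := by
    ext s t
    rw [Matrix.mul_apply, Finset.sum_eq_single t]
    · rw [Matrix.mul_apply, Finset.sum_eq_single s]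
      · have hST : S t t = (-1:ℝ)^(t:ℕ) := by simp [S]
        have hSs : S s s = (-1:ℝ)^(s:ℕ) := by simp [S]
        rw [hST, hSs, hG]
        conv_rhs => rw [← Equiv.sum_comp σ (fun l : ι =>
          ((2 * (l : ℤ) - 1 : ℤ) : ℝ) ^ (s : ℕ) *
          (v (l : ℤ) * ((2 * (l : ℤ) - 1 : ℤ) : ℝ) ^ (t : ℕ)))]
        rw [Finset.mul_sum, Finset.sum_mul]
        refine Finset.sum_congr rfl fun l _ => ?_
        have hx : ((2 * ((σ l : ι) : ℤ) - 1 : ℤ) : ℝ) = -((2 * (l : ℤ) - 1 : ℤ) : ℝ) := by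
          have h' : ((σ l : ι) : ℤ) = 1 - (l : ℤ) := rfl
          rw [h']; push_cast; ring
        have hvv : v ((σ l : ι) : ℤ) = v (l : ℤ) := by
          have h' : ((σ l : ι) : ℤ) = 1 - (l : ℤ) := rfl
          rw [h', ← hsym (l : ℤ) l.2]
        rw [hx, hvv, neg_pow, neg_pow]
        ring
      · intro b _ hb
        have h' : S s b = 0 := Matrix.diagonal_apply_ne' _ hb
        rw [h', zero_mul]
      · intro h; exact absurd (Finset.mem_univ s) h
    · intro b _ hb
      have h' : S b t = 0 := Matrix.diagonal_apply_ne _ hb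
      rw [h', mul_zero]
    · intro h; exact absurd (Finset.mem_univ t) h
  have hGinv : G⁻¹ = S * (G⁻¹ * S) := by
    conv_lhs => rw [← hGS]
    rw [Matrix.mul_inv_rev, Matrix.mul_inv_rev, hSinv]
  set c : Fin (d + 1) → ℝ := G⁻¹ *ᵥ Pi.single 0 1 with hc
  have hSe : S *ᵥ (Pi.single 0 1 : Fin (d+1) → ℝ) = Pi.single 0 1 := by
    ext t
    rw [Matrix.mulVec_diagonal]
    by_cases ht : t = 0
    · subst ht; simp
    · simp [Pi.single_apply, ht]
  have hScc : ∀ t : Fin (d + 1), (-1 : ℝ) ^ (t : ℕ) * c t = c t := by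
    have h1 : S *ᵥ c = c := by
      conv_rhs => rw [hc, hGinv]
      rw [← Matrix.mulVec_mulVec, ← Matrix.mulVec_mulVec, hSe, ← hc]
    intro t
    have := congrFun h1 t
    rwa [Matrix.mulVec_diagonal] at this
  have ha : ∀ i : ι, oddMask n d v i =
      v (i : ℤ) * ∑ t : Fin (d+1), ((2 * (i : ℤ) - 1 : ℤ) : ℝ) ^ (t : ℕ) * c t := by
    intro i
    have h0 : oddMask n d v = (W * X * G⁻¹) *ᵥ Pi.single 0 1 := rfl
    rw [h0, ← Matrix.mulVec_mulVec, ← Matrix.mulVec_mulVec, ← hc]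
    rw [show (W *ᵥ (X *ᵥ c)) i = v (i : ℤ) * (X *ᵥ c) i from Matrix.mulVec_diagonal _ _ _]
    congr 1
  intro l hl hl'
  rw [ha, ha]
  have hv1 : v (1 - l) = v l := (hsym l hl).symm
  show v l * _ = v (1 - l) * _
  rw [hv1]
  congr 1
  refine Finset.sum_congr rfl fun t _ => ?_
  show ((2 * l - 1 : ℤ) : ℝ) ^ (t : ℕ) * c t = ((2 * (1 - l) - 1 : ℤ) : ℝ) ^ (t : ℕ) * c t
  have hx : ((2 * (1 - l) - 1 : ℤ) : ℝ) = -((2 * l - 1 : ℤ) : ℝ) := by push_cast; ring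
  rw [hx, neg_pow]
  have h' : (-1:ℝ) ^ (t:ℕ) * ((2 * l - 1 : ℤ) : ℝ) ^ (t:ℕ) * c t
      = ((2 * l - 1 : ℤ) : ℝ) ^ (t:ℕ) * ((-1:ℝ) ^ (t:ℕ) * c t) := by ring
  rw [h', hScc t]
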